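/- In the lattice L with k = 7, set P = H − E₁ − E₂ − X, R = 2H − (E₃ + E₄ + E₅ + E₆) − X − Y, and vᵢ = E_{i+1} − E_i for i = 1,…,5. Then: (i) ⟨P+R, P+R⟩ = ⟨R,R⟩ = ⟨vᵢ,vᵢ⟩ = −2 for all i, and ⟨P,R⟩ = 1; (ii) among the seven vectors P+R, R, v₁,…,v₅ the nonzero pairings between distinct vectors are exactly ⟨P+R, R⟩ = −1, ⟨R, v₂⟩ = 1 and ⟨vᵢ, v_{i+1}⟩ = 1 for i = 1,…,4, all other pairings between distinct vectors in the list being 0; hence the graph whose edges are pairs with pairing of absolute value 1 is the E₇ Dynkin diagram with trivalent vertex v₂; (iii) each of the seven vectors is orthogonal to E', G', F and C; (iv) ⟨v,D⟩ = 0 for each vector v in the list except v₂, and ⟨v₂,D⟩ = 1. -/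

import Mathlib

namespace ALE.E7

/-- The lattice `L ≅ ℤ¹¹` (`k = 7`) with basis `H, E₁, …, E₆, X, Y, F, C`
(indices `0, 1, …, 6, 7, 8, 9, 10`). -/
abbrev L : Type := Fin 11 → ℤ

/-- The intersection pairing: distinct basis vectors are orthogonal, `⟨H,H⟩ = 1`
and every other basis vector has self-pairing `−1`. -/
def pairing (u v : L) : ℤ := ∑ i, (if i = 0 then 1 else -1) * u i * v i

def H : L := Pi.single 0 1
open Fin.NatCast in
def E (i : ℕ) : L := Pi.single (i : Fin 11) 1
def X : L := Pi.single 7 1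
def Y : L := Pi.single 8 1
def F : L := Pi.single 9 1
def C : L := Pi.single 10 1

/-- `E' = 2H − (E₁ + ⋯ + E₆) − F − C`. -/
def E' : L := (2 : ℤ) • H - (∑ i ∈ Finset.Icc 1 6, E i) - F - C

/-- `G' = H − X − F − Y − C`. -/
def G' : L := H - X - F - Y - C

/-- `D = E' + Σ_{i=3}^{6} (H − Eᵢ − X)`, the class of the polar divisor
`E + Ē₃ + ⋯ + Ē₆`. -/
def D : L := E' + ∑ i ∈ Finset.Icc 3 6, (H - E i - X)

/-- `P = H − E₁ − E₂ − X`. -/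
def P : L := H - E 1 - E 2 - X

/-- `R = 2H − (E₃ + E₄ + E₅ + E₆) − X − Y`. -/
def R : L := (2 : ℤ) • H - (E 3 + E 4 + E 5 + E 6) - X - Y

/-- `vᵢ = E_{i+1} − Eᵢ`. -/
def v (i : ℕ) : L := E (i + 1) - E i

/-- The list of seven vectors `P + R, R, v₁, …, v₅`. -/
def w : Fin 7 → L := ![P + R, R, v 1, v 2, v 3, v 4, v 5]

/-- The pairs of distinct vectors with pairing `1`: `R–v₂` and `vᵢ–v_{i+1}` for
`i = 1, …, 4`; the trivalent vertex of the resulting E₇ diagram is `v₂` (index `3`). -/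
def edges : List (Fin 7 × Fin 7) := [(1, 3), (2, 3), (3, 4), (4, 5), (5, 6)]

theorem e7_dynkin_diagram :
    -- (i) all seven vectors have self-intersection −2, and `⟨P, R⟩ = 1`
    (pairing (P + R) (P + R) = -2 ∧ pairing R R = -2 ∧
      (∀ i ∈ Finset.Icc 1 5, pairing (v i) (v i) = -2) ∧ pairing P R = 1) ∧
    -- (ii) among the seven vectors `P+R, R, v₁, …, v₅` the nonzero pairings between
    -- distinct vectors are exactly `⟨P+R, R⟩ = −1`, `⟨R, v₂⟩ = 1` and
    -- `⟨vᵢ, v_{i+1}⟩ = 1` for `i = 1, …, 4`; all other pairings vanish.  Hence the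
    -- graph whose edges are the pairs with pairing of absolute value 1 is the E₇
    -- Dynkin diagram with trivalent vertex `v₂` (index 3)
    (∀ i j : Fin 7, i ≠ j →
      pairing (w i) (w j) =
        if (i, j) = ((0 : Fin 7), (1 : Fin 7)) ∨ (j, i) = ((0 : Fin 7), (1 : Fin 7)) then -1
        else if (i, j) ∈ edges ∨ (j, i) ∈ edges then 1 else 0) ∧
    -- (iii) each of the seven vectors is orthogonal to E', G', F and C
    (∀ i : Fin 7, pairing (w i) E' = 0 ∧ pairing (w i) G' = 0 ∧
      pairing (w i) F = 0 ∧ pairing (w i) C = 0) ∧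
    -- (iv) `⟨v₂, D⟩ = 1` (the trivalent vertex, index 3) and `⟨v, D⟩ = 0`
    -- for every other vector in the list
    (∀ i : Fin 7, pairing (w i) D = if i = 3 then 1 else 0) := by
  decide

end ALE.E7
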